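/- In many-logic modal structures over 𝕃, defining v_w(◇A) as the supremum in L_w of the up-interpretations in L_w of the values of A at R-accessible worlds, one has v_w(◇A) = v_w(¬□¬A) at every world w of every structure. -/

import Mathlib

/-- The six-valued lattice `L6` of the logic `LET_K^+`:
`F < F₀ < n, b < T₀ < T` with `n` and `b` incomparable. -/
inductive L6 : Type
  | T | T0 | b | n | F0 | F
  deriving DecidableEq

instance : Fintype L6 where
  elems := {L6.T, L6.T0, L6.b, L6.n, L6.F0, L6.F}
  complete := fun x => by cases x <;> decide

namespace L6

/-- The order of `L6` as a Boolean-valued relation. -/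
def ble : L6 → L6 → Bool := fun x y =>
  x == y || x == F || y == T || (x == F0 && !(y == F)) || (y == T0 && !(x == T) && !(x == F))

/-- Binary meet of `L6` (the only incomparable pair `n, b` has meet `F₀`). -/
def binf (x y : L6) : L6 := if ble x y then x else if ble y x then y else F0

/-- Binary join of `L6` (the only incomparable pair `n, b` has join `T₀`). -/
def bsup (x y : L6) : L6 := if ble x y then y else if ble y x then x else T0

private theorem hrefl : ∀ x, ble x x = true := by decide
private theorem htrans : ∀ x y z, ble x y = true → ble y z = true → ble x z = true := by decide
private theorem hantisymm : ∀ x y, ble x y = true → ble y x = true → x = y := by decide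
private theorem hsl : ∀ x y, ble x (bsup x y) = true := by decide
private theorem hsr : ∀ x y, ble y (bsup x y) = true := by decide
private theorem hsle : ∀ x y z, ble x z = true → ble y z = true → ble (bsup x y) z = true := by
  decide
private theorem hil : ∀ x y, ble (binf x y) x = true := by decide
private theorem hir : ∀ x y, ble (binf x y) y = true := by decide
private theorem hile : ∀ x y z, ble x y = true → ble x z = true → ble x (binf y z) = true := by
  decide

instance : Lattice L6 where
  le x y := ble x y = true
  le_refl := hrefl
  le_trans := htrans
  le_antisymm := hantisymm
  sup := bsup
  le_sup_left := hsl
  le_sup_right := hsr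
  sup_le := hsle
  inf := binf
  inf_le_left := hil
  inf_le_right := hir
  le_inf := hile

instance : DecidableRel ((· ≤ ·) : L6 → L6 → Prop) :=
  fun x y => inferInstanceAs (Decidable (ble x y = true))

end L6

open L6 in
/-- The carriers of the nine lattices underlying the logics of the family 𝕃. -/
def carriersLAT : List (Set L6) :=
  [ Set.univ, {T0, b, n, F0}, {T, b, n, F}, {T0, b, F0}, {T, b, F},
    {T0, n, F0}, {T, n, F}, {T0, F0}, {T, F} ]

/-- The twist negation of L6: swaps T with F and T₀ with F₀, fixes b and n. -/
def neg6 : L6 → L6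
  | L6.T => L6.F
  | L6.F => L6.T
  | L6.T0 => L6.F0
  | L6.F0 => L6.T0
  | L6.b => L6.b
  | L6.n => L6.n

/-- Formulas of the modal language with negation, □ and ◇. -/
inductive Fm : Type
  | atom : Nat → Fm
  | neg : Fm → Fm
  | box : Fm → Fm
  | dia : Fm → Fm

/-- In many-logic modal structures over 𝕃, defining v_w(◇A) as the supremum in
the local lattice of the up-interpretations of the values of A at accessible
worlds, one has v_w(◇A) = v_w(¬□¬A) at every world.  Here each world carries a
complete lattice which is a dc-sublattice of L6 (order-reflecting inclusion with
range one of the nine carriers), negation is the twist negation (coinciding with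
neg6 via the inclusion, an order-reversing involutive bijection carrying infima
to suprema and conversely, with x ≤ ¬y iff ¬x ≥ y), v_w(□A) is the infimum of
the down-interpretations and v_w(◇A) the supremum of the up-interpretations of
the values at accessible worlds. -/
theorem dia_eq_neg_box_neg
    {W : Type*} (R : W → W → Prop)
    (Lw : W → Type*) [∀ w, CompleteLattice (Lw w)]
    (incl : ∀ w, Lw w → L6)
    (hord : ∀ w, ∀ x y : Lw w, x ≤ y ↔ incl w x ≤ incl w y)
    (hcar : ∀ w, Set.range (incl w) ∈ carriersLAT)
    (ng : ∀ w, Lw w → Lw w)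
    (hng : ∀ w, ∀ x : Lw w, incl w (ng w x) = neg6 (incl w x))
    (hngbij : ∀ w, Function.Bijective (ng w))
    (hnginf : ∀ w, ∀ A : Set (Lw w), ng w (sInf A) = sSup (ng w '' A))
    (hngsup : ∀ w, ∀ A : Set (Lw w), ng w (sSup A) = sInf (ng w '' A))
    (hnggal : ∀ w, ∀ x y : Lw w, x ≤ ng w y ↔ y ≤ ng w x)
    (v : ∀ w, Fm → Lw w)
    (hvneg : ∀ w A, v w (Fm.neg A) = ng w (v w A))
    (hvbox : ∀ w A, v w (Fm.box A) =
      sInf {x : Lw w | ∃ w', R w w' ∧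
        x = sSup {y : Lw w | incl w y ≤ incl w' (v w' A)}})
    (hvdia : ∀ w A, v w (Fm.dia A) =
      sSup {x : Lw w | ∃ w', R w w' ∧
        x = sInf {y : Lw w | incl w' (v w' A) ≤ incl w y}})
    (w : W) (A : Fm) :
    v w (Fm.dia A) = v w (Fm.neg (Fm.box (Fm.neg A))) := by
  have hneg6 : ∀ a b : L6, neg6 a ≤ neg6 b ↔ b ≤ a := by decide
  have hinj : ∀ x y : Lw w, incl w x = incl w y → x = y := fun x y h =>
    le_antisymm ((hord w x y).2 h.le) ((hord w y x).2 h.ge)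
  have hneg6inv : ∀ a : L6, neg6 (neg6 a) = a := by decide
  have hinv : ∀ x : Lw w, ng w (ng w x) = x := fun x => hinj _ _ (by
    rw [hng, hng, hneg6inv])
  rw [hvdia, hvneg, hvbox, hnginf]
  congr 1
  ext z
  constructor
  · rintro ⟨w', hR, rfl⟩
    refine ⟨sSup {y : Lw w | incl w y ≤ incl w' (v w' (Fm.neg A))},
      ⟨w', hR, rfl⟩, ?_⟩
    rw [hngsup]
    congr 1
    ext u
    simp only [Set.mem_image, Set.mem_setOf_eq, hvneg, hng]
    constructor
    · rintro ⟨t, ht, rfl⟩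
      rw [hng]
      have h2 := (hneg6 _ _).mpr ht
      rwa [hneg6inv] at h2
    · intro hu
      refine ⟨ng w u, ?_, hinv u⟩
      rw [hng]
      exact (hneg6 _ _).mpr hu
  · rintro ⟨x, ⟨w', hR, rfl⟩, rfl⟩
    refine ⟨w', hR, ?_⟩
    rw [hngsup]
    congr 1
    ext u
    simp only [Set.mem_image, Set.mem_setOf_eq, hvneg, hng]
    constructor
    · rintro ⟨t, ht, rfl⟩
      rw [hng]
      have h2 := (hneg6 _ _).mpr ht
      rwa [hneg6inv] at h2
    · intro hu
      refine ⟨ng w u, ?_, hinv u⟩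
      rw [hng]
      exact (hneg6 _ _).mpr hu
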